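/- (Theorem 1, population-risk bound.) Suppose |ℓ(f̂(x), k)| ≤ M for all x, k, assume E‖p_θ(X)‖² < ∞ for all θ, and suppose there exists θ* ∈ Θ with p_{θ*}(x) = p(x) for μ_X-almost every x. Then for every θ ∈ Θ, E_{X∼μ_X}[ |g_{ca,θ}(X) − g(X)| ] ≤ M · E_{X∼μ_X}[ ‖p_θ(X) − p(X)‖₁ ] ≤ M · √( K · ( B(θ) − B* ) ), where B(θ) = E_{(X,Y)∼μ}[ ‖p_θ(X) − e_Y‖² ] is the expected Brier loss of p_θ and B* = E_{(X,Y)∼μ}[ ‖p(X) − e_Y‖² ] is the expected Brier loss of the true conditional probability p. -/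

import Mathlib

open MeasureTheory
open scoped NNReal ENNReal

private lemma brier_expand {K : ℕ} (a : Fin K → ℝ) (j : Fin K) :
    ∑ k, (a k - if j = k then (1:ℝ) else 0) ^ 2 = (∑ k, a k ^ 2) - 2 * a j + 1 := by
  have h : ∀ k : Fin K, (a k - if j = k then (1:ℝ) else 0) ^ 2
      = a k ^ 2 - 2 * (if j = k then a k else 0) + (if j = k then (1:ℝ) else 0) := by
    intro k; split <;> ring
  simp_rw [h]
  rw [Finset.sum_add_distrib, Finset.sum_sub_distrib, ← Finset.mul_sum,
    Finset.sum_ite_eq, Finset.sum_ite_eq]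
  simp

private lemma int_comp {X : Type*} [MeasurableSpace X] {K : ℕ} (μ : Measure (X × Fin K))
    (h : X → Fin K → ℝ) (hh : Measurable h)
    (hint : Integrable (fun x => ∑ k, |h x k|) (μ.map Prod.fst)) :
    Integrable (fun ω : X × Fin K => h ω.1 ω.2) μ := by
  have hFmeas : Measurable fun ω : X × Fin K => h ω.1 ω.2 :=
    measurable_from_prod_countable_left fun k => (measurable_pi_apply k).comp hh
  have hG : Integrable (fun ω : X × Fin K => ∑ k, |h ω.1 k|) μ :=
    (integrable_map_measure hint.aestronglyMeasurable measurable_fst.aemeasurable).mp hint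
  refine hG.mono hFmeas.aestronglyMeasurable (ae_of_all _ fun ω => ?_)
  simp only [Real.norm_eq_abs]
  exact (Finset.single_le_sum (fun k _ => abs_nonneg (h ω.1 k)) (Finset.mem_univ ω.2)).trans
    (le_abs_self _)

private lemma disint {X : Type*} [MeasurableSpace X] {K : ℕ}
    (μ : Measure (X × Fin K))
    (p : X → Fin K → ℝ) (hp : Measurable p) (hp0 : ∀ x k, 0 ≤ p x k)
    (hp1 : ∀ x, ∑ k, p x k = 1)
    (hkernel : ∀ (A : Set X), MeasurableSet A → ∀ k : Fin K,
      μ (A ×ˢ ({k} : Set (Fin K))) = ∫⁻ x in A, ENNReal.ofReal (p x k) ∂(μ.map Prod.fst))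
    (h : X → Fin K → ℝ) (hh : Measurable h)
    (hint : Integrable (fun x => ∑ k, |h x k|) (μ.map Prod.fst)) :
    ∫ ω, h ω.1 ω.2 ∂μ = ∫ x, ∑ k, p x k * h x k ∂(μ.map Prod.fst) := by
  set ν := μ.map Prod.fst with hν
  have hmk : ∀ k, Measurable fun x => h x k := fun k => (measurable_pi_apply k).comp hh
  have hpk : ∀ k, Measurable fun x => p x k := fun k => (measurable_pi_apply k).comp hp
  -- each slice integrable over ν
  have hk_int : ∀ k : Fin K, Integrable (fun x => h x k) ν := by
    intro k
    refine hint.mono ((hmk k).aestronglyMeasurable) (ae_of_all _ fun x => ?_)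
    simp only [Real.norm_eq_abs]
    exact (Finset.single_le_sum (fun j _ => abs_nonneg (h x j)) (Finset.mem_univ k)).trans
      (le_abs_self _)
  -- mapped restricted measure is withDensity
  have hmap : ∀ k : Fin K, (μ.restrict (Set.univ ×ˢ ({k} : Set (Fin K)))).map Prod.fst
      = ν.withDensity (fun x => ENNReal.ofReal (p x k)) := by
    intro k
    refine Measure.ext fun A hA => ?_
    rw [Measure.map_apply measurable_fst hA,
      Measure.restrict_apply (measurable_fst hA), withDensity_apply _ hA]
    have hset : Prod.fst ⁻¹' A ∩ Set.univ ×ˢ ({k} : Set (Fin K)) = A ×ˢ ({k} : Set (Fin K)) := by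
      ext ⟨x, j⟩
      simp only [Set.mem_inter_iff, Set.mem_preimage, Set.mem_prod, Set.mem_univ,
        Set.mem_singleton_iff, true_and]
    rw [hset]
    exact hkernel A hA k
  have hdecomp : (fun ω : X × Fin K => h ω.1 ω.2)
      = fun ω => ∑ k, Set.indicator (Set.univ ×ˢ ({k} : Set (Fin K))) (fun ω => h ω.1 k) ω := by
    funext ω
    have : ∀ k : Fin K, Set.indicator (Set.univ ×ˢ ({k} : Set (Fin K))) (fun ω' => h ω'.1 k) ω
        = if ω.2 = k then h ω.1 k else 0 := by
      intro k
      simp only [Set.indicator_apply, Set.mem_prod, Set.mem_univ, Set.mem_singleton_iff,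
        true_and]
    rw [Finset.sum_congr rfl fun k _ => this k, Finset.sum_ite_eq]
    simp
  have hmeasset : ∀ k : Fin K, MeasurableSet (Set.univ ×ˢ ({k} : Set (Fin K))) :=
    fun k => (MeasurableSet.univ : MeasurableSet (Set.univ : Set X)).prod (measurableSet_singleton k)
  have hcomp_int : ∀ k : Fin K, Integrable (fun ω : X × Fin K => h ω.1 k) μ := by
    intro k
    exact (integrable_map_measure (hmk k).aestronglyMeasurable
      measurable_fst.aemeasurable).mp (hk_int k)
  calc ∫ ω, h ω.1 ω.2 ∂μ
      = ∫ ω, ∑ k, Set.indicator (Set.univ ×ˢ ({k} : Set (Fin K))) (fun ω' => h ω'.1 k) ω ∂μ := by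
        rw [hdecomp]
    _ = ∑ k, ∫ ω, Set.indicator (Set.univ ×ˢ ({k} : Set (Fin K))) (fun ω' => h ω'.1 k) ω ∂μ := by
        exact integral_finset_sum _ fun k _ => (hcomp_int k).indicator (hmeasset k)
    _ = ∑ k, ∫ ω in Set.univ ×ˢ ({k} : Set (Fin K)), h ω.1 k ∂μ := by
        exact Finset.sum_congr rfl fun k _ => integral_indicator (hmeasset k)
    _ = ∑ k, ∫ x, h x k ∂((μ.restrict (Set.univ ×ˢ ({k} : Set (Fin K)))).map Prod.fst) := by
        exact Finset.sum_congr rfl fun k _ =>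
          (integral_map measurable_fst.aemeasurable (hmk k).aestronglyMeasurable).symm
    _ = ∑ k, ∫ x, p x k * h x k ∂ν := by
        refine Finset.sum_congr rfl fun k _ => ?_
        rw [hmap k]
        have : (fun x => ENNReal.ofReal (p x k))
            = fun x => ((Real.toNNReal (p x k) : ℝ≥0) : ℝ≥0∞) := rfl
        rw [this, integral_withDensity_eq_integral_smul ((hpk k).real_toNNReal)]
        refine integral_congr_ae (ae_of_all _ fun x => ?_)
        simp [NNReal.smul_def, Real.coe_toNNReal _ (hp0 x k)]
    _ = ∫ x, ∑ k, p x k * h x k ∂ν := by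
        refine (integral_finset_sum _ fun k _ => ?_).symm
        refine hint.mono ((hpk k).mul (hmk k)).aestronglyMeasurable (ae_of_all _ fun x => ?_)
        simp only [Real.norm_eq_abs, abs_mul]
        have h1 : |p x k| * |h x k| ≤ 1 * |h x k| := by
          apply mul_le_mul_of_nonneg_right _ (abs_nonneg _)
          rw [abs_of_nonneg (hp0 x k)]
          exact (Finset.single_le_sum (fun j _ => hp0 x j) (Finset.mem_univ k)).trans
            (le_of_eq (hp1 x))
        rw [one_mul] at h1
        exact h1.trans ((Finset.single_le_sum (fun j _ => abs_nonneg (h x j))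
          (Finset.mem_univ k)).trans (le_abs_self _))

/-- **Theorem 1, population-risk bound.** Under the bound `|ℓ(f̂ x, k)| ≤ M`,
square-integrability of each `pθ θ`, and weak realizability, for every `θ`:
`E|g_{ca,θ}(X) − g(X)| ≤ M · E‖pθ θ X − p X‖₁ ≤ M √(K (B(θ) − B*))`, where `B(θ)` is the
expected Brier loss of `pθ θ` and `B*` that of the true conditional probability `p`. -/
theorem population_risk_bound_via_brier
    {X : Type*} [MeasurableSpace X] (K : ℕ) (hK : 1 ≤ K)
    (μ : Measure (X × Fin K)) [IsProbabilityMeasure μ]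
    (p : X → Fin K → ℝ) (hp : Measurable p)
    (hp0 : ∀ x k, 0 ≤ p x k) (hp1 : ∀ x, ∑ k, p x k = 1)
    (hkernel : ∀ (A : Set X), MeasurableSet A → ∀ k : Fin K,
      μ (A ×ˢ ({k} : Set (Fin K)))
        = ∫⁻ x in A, ENNReal.ofReal (p x k) ∂(μ.map Prod.fst))
    (fhat : X → Fin K) (hfhat : Measurable fhat)
    (ℓ : Fin K → Fin K → ℝ)
    (M : ℝ) (hℓbd : ∀ x k, |ℓ (fhat x) k| ≤ M)
    {Θ : Type*} (pθ : Θ → X → Fin K → ℝ) (hpθ : ∀ θ, Measurable (pθ θ))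
    (hpθ2 : ∀ θ, Integrable (fun x => ∑ k, (pθ θ x k) ^ 2) (μ.map Prod.fst))
    (θstar : Θ)
    (hreal : ∀ᵐ x ∂(μ.map Prod.fst), pθ θstar x = p x) :
    ∀ θ : Θ,
      (∫ x, |(∑ k, ℓ (fhat x) k * pθ θ x k) - ∑ k, ℓ (fhat x) k * p x k|
          ∂(μ.map Prod.fst))
        ≤ M * ∫ x, ∑ k, |pθ θ x k - p x k| ∂(μ.map Prod.fst) ∧
      M * (∫ x, ∑ k, |pθ θ x k - p x k| ∂(μ.map Prod.fst))
        ≤ M * Real.sqrt ((K : ℝ) *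
            ((∫ ω, ∑ k, (pθ θ ω.1 k - (if ω.2 = k then (1 : ℝ) else 0)) ^ 2 ∂μ)
              - ∫ ω, ∑ k, (p ω.1 k - (if ω.2 = k then (1 : ℝ) else 0)) ^ 2 ∂μ)) := by
  intro θ
  set ν := μ.map Prod.fst with hνdef
  haveI : IsProbabilityMeasure ν := Measure.isProbabilityMeasure_map measurable_fst.aemeasurable
  have hpk : ∀ k, Measurable fun x => p x k := fun k => (measurable_pi_apply k).comp hp
  have hak : ∀ k, Measurable fun x => pθ θ x k := fun k => (measurable_pi_apply k).comp (hpθ θ)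
  have hple1 : ∀ x k, p x k ≤ 1 := fun x k =>
    (Finset.single_le_sum (fun j _ => hp0 x j) (Finset.mem_univ k)).trans (le_of_eq (hp1 x))
  -- nonemptiness and 0 ≤ M
  have hXne : Nonempty (X × Fin K) := by
    by_contra hne
    rw [not_nonempty_iff] at hne
    have h1 := measure_univ (μ := μ)
    rw [Set.univ_eq_empty_iff.2 hne, measure_empty] at h1
    exact one_ne_zero h1.symm
  obtain ⟨x0, k0⟩ := hXne
  have hM : 0 ≤ M := (abs_nonneg _).trans (hℓbd x0 k0)
  -- integrability of ∑ |pθ|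
  have habs : Integrable (fun x => ∑ k, |pθ θ x k|) ν := by
    have hdom : Integrable (fun x => ((K : ℝ) + ∑ k, (pθ θ x k) ^ 2) / 2) ν :=
      ((integrable_const _).add (hpθ2 θ)).div_const 2
    refine hdom.mono (Finset.measurable_sum _ fun k _ => (hak k).abs).aestronglyMeasurable
      (ae_of_all _ fun x => ?_)
    simp only [Real.norm_eq_abs]
    rw [abs_of_nonneg (Finset.sum_nonneg fun k _ => abs_nonneg _)]
    have h2 : ∑ k, |pθ θ x k| ≤ ∑ k : Fin K, (1 + (pθ θ x k) ^ 2) / 2 := by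
      refine Finset.sum_le_sum fun k _ => ?_
      nlinarith [sq_nonneg (|pθ θ x k| - 1), sq_abs (pθ θ x k)]
    have h3 : ∑ k : Fin K, (1 + (pθ θ x k) ^ 2) / 2
        = ((K : ℝ) + ∑ k, (pθ θ x k) ^ 2) / 2 := by
      rw [← Finset.sum_div, Finset.sum_add_distrib]
      simp
    exact (h2.trans (le_of_eq h3)).trans (le_abs_self _)
  have hdm : Measurable fun x => ∑ k, |pθ θ x k - p x k| :=
    Finset.measurable_sum _ fun k _ => ((hak k).sub (hpk k)).abs
  have hdint : Integrable (fun x => ∑ k, |pθ θ x k - p x k|) ν := by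
    refine (habs.add (integrable_const (K : ℝ))).mono hdm.aestronglyMeasurable
      (ae_of_all _ fun x => ?_)
    simp only [Real.norm_eq_abs]
    rw [abs_of_nonneg (Finset.sum_nonneg fun k _ => abs_nonneg _)]
    have h2 : ∑ k, |pθ θ x k - p x k| ≤ ∑ k : Fin K, (|pθ θ x k| + 1) := by
      refine Finset.sum_le_sum fun k _ => ?_
      refine (abs_sub _ _).trans ?_
      have := abs_of_nonneg (hp0 x k)
      have := hple1 x k
      linarith
    have h3 : ∑ k : Fin K, (|pθ θ x k| + 1) = (∑ k, |pθ θ x k|) + (K : ℝ) := by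
      rw [Finset.sum_add_distrib]; simp
    exact (h2.trans (le_of_eq h3)).trans (le_abs_self _)
  have hd2int : Integrable (fun x => ∑ k, (pθ θ x k - p x k) ^ 2) ν := by
    refine (((hpθ2 θ).add (habs.const_mul 2)).add (integrable_const (K : ℝ))).mono
      (Finset.measurable_sum _ fun k _ =>
        (((hak k).sub (hpk k)).pow measurable_const)).aestronglyMeasurable
      (ae_of_all _ fun x => ?_)
    simp only [Real.norm_eq_abs]
    rw [abs_of_nonneg (Finset.sum_nonneg fun k _ => sq_nonneg _)]
    have h2 : ∑ k, (pθ θ x k - p x k) ^ 2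
        ≤ ∑ k : Fin K, ((pθ θ x k) ^ 2 + 2 * |pθ θ x k| + 1) := by
      refine Finset.sum_le_sum fun k _ => ?_
      have h0 := hp0 x k
      have h1 := hple1 x k
      have h4 := abs_nonneg (pθ θ x k)
      have h5 := le_abs_self (pθ θ x k)
      have h6 := neg_abs_le (pθ θ x k)
      nlinarith [sq_abs (pθ θ x k)]
    have h3 : ∑ k : Fin K, ((pθ θ x k) ^ 2 + 2 * |pθ θ x k| + 1)
        = ((∑ k, (pθ θ x k) ^ 2) + 2 * ∑ k, |pθ θ x k|) + (K : ℝ) := by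
      rw [Finset.sum_add_distrib, Finset.sum_add_distrib, ← Finset.mul_sum]
      simp
    exact (h2.trans (le_of_eq h3)).trans (le_abs_self _)
  have hpa : Integrable (fun x => ∑ k, p x k * pθ θ x k) ν := by
    refine habs.mono (Finset.measurable_sum _ fun k _ =>
      (hpk k).mul (hak k)).aestronglyMeasurable (ae_of_all _ fun x => ?_)
    simp only [Real.norm_eq_abs]
    refine (Finset.abs_sum_le_sum_abs _ _).trans ?_
    refine le_trans (Finset.sum_le_sum fun k _ => ?_) (le_abs_self _)
    rw [abs_mul, abs_of_nonneg (hp0 x k)]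
    exact mul_le_of_le_one_left (abs_nonneg _) (hple1 x k)
  have hpabs : Integrable (fun x => ∑ k, |p x k|) ν := by
    refine (integrable_const (K : ℝ)).mono (Finset.measurable_sum _ fun k _ =>
      (hpk k).abs).aestronglyMeasurable (ae_of_all _ fun x => ?_)
    simp only [Real.norm_eq_abs]
    rw [abs_of_nonneg (Finset.sum_nonneg fun k _ => abs_nonneg _)]
    refine le_trans (Finset.sum_le_sum (g := fun _ => (1:ℝ)) fun k _ => ?_) ?_
    · show |p x k| ≤ (1:ℝ)
      rw [abs_of_nonneg (hp0 x k)]; exact hple1 x k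
    · simp [le_abs_self]
  have hp2 : Integrable (fun x => ∑ k, (p x k) ^ 2) ν := by
    refine (integrable_const (K : ℝ)).mono (Finset.measurable_sum _ fun k _ =>
      ((hpk k).pow measurable_const)).aestronglyMeasurable (ae_of_all _ fun x => ?_)
    simp only [Real.norm_eq_abs]
    rw [abs_of_nonneg (Finset.sum_nonneg fun k _ => sq_nonneg _)]
    refine le_trans (Finset.sum_le_sum (g := fun _ => (1:ℝ)) fun k _ => ?_) ?_
    · show (p x k) ^ 2 ≤ (1:ℝ)
      nlinarith [hp0 x k, hple1 x k]
    · simp [le_abs_self]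
  constructor
  · -- Part 1
    rw [← integral_const_mul]
    refine integral_mono_of_nonneg (ae_of_all _ fun x => abs_nonneg _)
      (hdint.const_mul M) (ae_of_all _ fun x => ?_)
    calc |(∑ k, ℓ (fhat x) k * pθ θ x k) - ∑ k, ℓ (fhat x) k * p x k|
        = |∑ k, ℓ (fhat x) k * (pθ θ x k - p x k)| := by
          rw [← Finset.sum_sub_distrib]
          congr 1
          exact Finset.sum_congr rfl fun k _ => (mul_sub _ _ _).symm
      _ ≤ ∑ k, |ℓ (fhat x) k * (pθ θ x k - p x k)| := Finset.abs_sum_le_sum_abs _ _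
      _ ≤ ∑ k, M * |pθ θ x k - p x k| := by
          refine Finset.sum_le_sum fun k _ => ?_
          rw [abs_mul]
          exact mul_le_mul_of_nonneg_right (hℓbd x k) (abs_nonneg _)
      _ = M * ∑ k, |pθ θ x k - p x k| := (Finset.mul_sum _ _ _).symm
  · -- Part 2
    -- Brier score computation
    have brier : ∀ (h : X → Fin K → ℝ), Measurable h →
        Integrable (fun x => ∑ k, |h x k|) ν → Integrable (fun x => ∑ k, (h x k) ^ 2) ν →
        ∫ ω, ∑ k, (h ω.1 k - if ω.2 = k then (1 : ℝ) else 0) ^ 2 ∂μ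
          = (∫ x, ∑ k, (h x k) ^ 2 ∂ν) - 2 * ∫ x, ∑ k, p x k * h x k ∂ν + 1 := by
      intro h hh hint hint2
      have e1 : ∀ ω : X × Fin K, ∑ k, (h ω.1 k - if ω.2 = k then (1 : ℝ) else 0) ^ 2
          = (∑ k, (h ω.1 k) ^ 2) - 2 * h ω.1 ω.2 + 1 := fun ω => brier_expand _ _
      have i1 : Integrable (fun ω : X × Fin K => ∑ k, (h ω.1 k) ^ 2) μ :=
        (integrable_map_measure hint2.aestronglyMeasurable measurable_fst.aemeasurable).mp hint2
      have i2 : Integrable (fun ω : X × Fin K => h ω.1 ω.2) μ := int_comp μ h hh hint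
      have i3 : Integrable (fun ω : X × Fin K => (∑ k, (h ω.1 k) ^ 2) - 2 * h ω.1 ω.2) μ :=
        i1.sub (i2.const_mul 2)
      rw [integral_congr_ae (ae_of_all _ e1), integral_add i3
        (integrable_const 1), integral_sub i1 (i2.const_mul 2), integral_const_mul,
        integral_const]
      have e2 : ∫ ω : X × Fin K, ∑ k, (h ω.1 k) ^ 2 ∂μ = ∫ x, ∑ k, (h x k) ^ 2 ∂ν := by
        rw [hνdef, integral_map measurable_fst.aemeasurable hint2.aestronglyMeasurable]
      rw [e2, disint μ p hp hp0 hp1 hkernel h hh hint]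
      simp
      rfl
    have hbθ := brier (pθ θ) (hpθ θ) habs (hpθ2 θ)
    have hbp := brier p hp hpabs hp2
    have hpp : (∫ x, ∑ k, p x k * p x k ∂ν) = ∫ x, ∑ k, (p x k) ^ 2 ∂ν := by
      refine integral_congr_ae (ae_of_all _ fun x => ?_)
      exact Finset.sum_congr rfl fun k _ => (sq (p x k)).symm
    have hBdiff : (∫ ω, ∑ k, (pθ θ ω.1 k - if ω.2 = k then (1 : ℝ) else 0) ^ 2 ∂μ)
        - (∫ ω, ∑ k, (p ω.1 k - if ω.2 = k then (1 : ℝ) else 0) ^ 2 ∂μ)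
        = ∫ x, ∑ k, (pθ θ x k - p x k) ^ 2 ∂ν := by
      rw [hbθ, hbp, hpp]
      have e3 : ∀ x, ∑ k, (pθ θ x k - p x k) ^ 2
          = (∑ k, (pθ θ x k) ^ 2) - 2 * (∑ k, p x k * pθ θ x k) + ∑ k, (p x k) ^ 2 := by
        intro x
        have : ∀ k : Fin K, (pθ θ x k - p x k) ^ 2
            = (pθ θ x k) ^ 2 - 2 * (p x k * pθ θ x k) + (p x k) ^ 2 := fun k => by ring
        simp_rw [this, Finset.sum_add_distrib, Finset.sum_sub_distrib, ← Finset.mul_sum]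
      have i4 : Integrable (fun x => (∑ k, (pθ θ x k) ^ 2) - 2 * ∑ k, p x k * pθ θ x k) ν :=
        (hpθ2 θ).sub (hpa.const_mul 2)
      rw [integral_congr_ae (ae_of_all _ e3), integral_add i4 hp2,
        integral_sub (hpθ2 θ) (hpa.const_mul 2), integral_const_mul]
      ring
    rw [hBdiff]
    -- Cauchy–Schwarz / variance step
    refine mul_le_mul_of_nonneg_left ?_ hM
    have hI0 : 0 ≤ ∫ x, ∑ k, |pθ θ x k - p x k| ∂ν :=
      integral_nonneg fun x => Finset.sum_nonneg fun k _ => abs_nonneg _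
    have hptwise : ∀ x, (∑ k, |pθ θ x k - p x k|) ^ 2
        ≤ (K : ℝ) * ∑ k, (pθ θ x k - p x k) ^ 2 := by
      intro x
      have := sq_sum_le_card_mul_sum_sq (s := (Finset.univ : Finset (Fin K)))
        (f := fun k => |pθ θ x k - p x k|)
      simp only [Finset.card_univ, Fintype.card_fin, sq_abs] at this
      exact this
    have hgsq_int : Integrable (fun x => (∑ k, |pθ θ x k - p x k|) ^ 2) ν := by
      refine (hd2int.const_mul (K : ℝ)).mono
        (hdm.pow measurable_const).aestronglyMeasurable (ae_of_all _ fun x => ?_)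
      simp only [Real.norm_eq_abs]
      rw [abs_of_nonneg (sq_nonneg _)]
      exact (hptwise x).trans (le_abs_self _)
    have hmem : MemLp (fun x => ∑ k, |pθ θ x k - p x k|) 2 ν :=
      (memLp_two_iff_integrable_sq hdm.aestronglyMeasurable).2 hgsq_int
    have hvar := ProbabilityTheory.variance_nonneg (fun x => ∑ k, |pθ θ x k - p x k|) ν
    rw [ProbabilityTheory.variance_eq_sub hmem] at hvar
    simp only [Pi.pow_apply] at hvar
    have h2 : (∫ x, ∑ k, |pθ θ x k - p x k| ∂ν) ^ 2
        ≤ ∫ x, (∑ k, |pθ θ x k - p x k|) ^ 2 ∂ν := by linarith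
    have h3 : (∫ x, (∑ k, |pθ θ x k - p x k|) ^ 2 ∂ν)
        ≤ (K : ℝ) * ∫ x, ∑ k, (pθ θ x k - p x k) ^ 2 ∂ν := by
      rw [← integral_const_mul]
      exact integral_mono hgsq_int (hd2int.const_mul _) fun x => hptwise x
    rw [Real.le_sqrt hI0 (le_trans (le_trans (sq_nonneg _) h2) h3)]
    exact h2.trans h3
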